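/- Let ν(ξ) = ∫_{ℝ³} ∫_{S²} |(ξ-ξ*)·ω| M(ξ*) dω dξ* where M(ξ) = (2π)^{-3/2} e^{-|ξ|²/2}. Then there exist constants 0 < c₁ ≤ c₂ such that c₁(1+|ξ|²)^{1/2} ≤ ν(ξ) ≤ c₂(1+|ξ|²)^{1/2} for all ξ ∈ ℝ³. -/

import Mathlib

open MeasureTheory Real
open scoped RealInnerProductSpace

noncomputable def Mxw (ξ : EuclideanSpace ℝ (Fin 3)) : ℝ :=
  (2 * π) ^ (-(3 : ℝ) / 2) * Real.exp (-‖ξ‖ ^ 2 / 2)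

/-- The collision frequency for the hard-sphere model. -/
noncomputable def nu (ξ : EuclideanSpace ℝ (Fin 3)) : ℝ :=
  ∫ ξs : EuclideanSpace ℝ (Fin 3),
    (∫ ω : Metric.sphere (0 : EuclideanSpace ℝ (Fin 3)) 1,
        |⟪ξ - ξs, (ω : EuclideanSpace ℝ (Fin 3))⟫| * Mxw ξs
      ∂((volume : Measure (EuclideanSpace ℝ (Fin 3))).toSphere))

local notation "𝔼" => EuclideanSpace ℝ (Fin 3)

lemma int_gauss {b : ℝ} (hb : 0 < b) :
    Integrable (fun x : 𝔼 => rexp (-b * ‖x‖ ^ 2)) := by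
  have h := (GaussianFourier.integrable_cexp_neg_mul_sq_norm_add (V := 𝔼) (b := (b : ℂ))
    (by simpa using hb) 0 (0 : 𝔼)).norm
  refine h.congr (Filter.Eventually.of_forall fun x => ?_)
  simp [Complex.norm_exp]
  exact Or.inl (by norm_cast)

lemma norm_le_exp_quarter (t : ℝ) (ht : 0 ≤ t) : t ≤ rexp (4⁻¹ * t ^ 2) := by
  have h := Real.add_one_le_exp (4⁻¹ * t ^ 2)
  nlinarith [sq_nonneg (t - 2)]

lemma int_norm_gauss :
    Integrable (fun x : 𝔼 => ‖x‖ * rexp (-2⁻¹ * ‖x‖ ^ 2)) := by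
  refine (int_gauss (b := 4⁻¹) (by norm_num)).mono'
    ((continuous_norm.mul (by continuity)).aestronglyMeasurable)
    (Filter.Eventually.of_forall fun x => ?_)
  have h1 := norm_le_exp_quarter ‖x‖ (norm_nonneg x)
  have h2 : rexp (4⁻¹ * ‖x‖ ^ 2) * rexp (-2⁻¹ * ‖x‖ ^ 2) = rexp (-4⁻¹ * ‖x‖ ^ 2) := by
    rw [← Real.exp_add]; ring_nf
  have h3 : (0:ℝ) < rexp (-2⁻¹ * ‖x‖ ^ 2) := Real.exp_pos _
  rw [Real.norm_of_nonneg (by positivity)]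
  nlinarith

lemma Mxw_nonneg (ξ : 𝔼) : 0 ≤ Mxw ξ := by
  unfold Mxw; positivity

lemma Mxw_pos (ξ : 𝔼) : 0 < Mxw ξ := by
  unfold Mxw; positivity

lemma Mxw_eq (ξ : 𝔼) :
    Mxw ξ = (2 * π) ^ (-(3 : ℝ) / 2) * rexp (-2⁻¹ * ‖ξ‖ ^ 2) := by
  unfold Mxw; ring_nf

lemma int_Mxw : Integrable (fun x : 𝔼 => Mxw x) := by
  have := (int_gauss (b := 2⁻¹) (by norm_num)).const_mul ((2 * π) ^ (-(3 : ℝ) / 2))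
  exact this.congr (Filter.Eventually.of_forall fun x => (Mxw_eq x).symm)

lemma int_norm_Mxw : Integrable (fun x : 𝔼 => ‖x‖ * Mxw x) := by
  have := int_norm_gauss.const_mul ((2 * π) ^ (-(3 : ℝ) / 2))
  exact this.congr (Filter.Eventually.of_forall fun x => by simp only [Mxw_eq]; ring)

lemma cont_Mxw : Continuous (fun x : 𝔼 => Mxw x) := by
  unfold Mxw; continuity

lemma int_smul_Mxw : Integrable (fun x : 𝔼 => Mxw x • x) := by
  refine int_norm_Mxw.mono' ?_ (Filter.Eventually.of_forall fun x => ?_)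
  · exact (cont_Mxw.smul continuous_id).aestronglyMeasurable
  · rw [norm_smul, Real.norm_of_nonneg (Mxw_nonneg x), mul_comm]

lemma mean_zero : ∫ x : 𝔼, Mxw x • x = 0 := by
  have hneg : MeasurePreserving (fun x : 𝔼 => -x) volume volume :=
    Measure.measurePreserving_neg _
  have h := hneg.integral_comp (Homeomorph.neg 𝔼).measurableEmbedding
    (fun x : 𝔼 => Mxw x • x)
  have h2 : ∀ x : 𝔼, Mxw (-x) • (-x) = -(Mxw x • x) := by
    intro x; rw [show Mxw (-x) = Mxw x by unfold Mxw; rw [norm_neg], smul_neg]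
  simp only [h2] at h
  rw [integral_neg] at h
  have h3 : (∫ x : 𝔼, Mxw x • x) + (∫ x : 𝔼, Mxw x • x) = 0 := by
    nth_rewrite 1 [← h]; exact neg_add_cancel _
  have h4 : (2 : ℝ) • (∫ x : 𝔼, Mxw x • x) = 0 := by rw [two_smul]; exact h3
  rcases smul_eq_zero.mp h4 with h5 | h5
  · norm_num at h5
  · exact h5

noncomputable def Aint : ℝ := ∫ x : 𝔼, Mxw x
noncomputable def Bint : ℝ := ∫ x : 𝔼, ‖x‖ * Mxw x

lemma Aint_pos : 0 < Aint := by
  rw [Aint, integral_pos_iff_support_of_nonneg Mxw_nonneg int_Mxw]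
  have : Function.support (fun x : 𝔼 => Mxw x) = Set.univ := by
    ext x; simp [Function.mem_support, (Mxw_pos x).ne']
  rw [this]
  exact isOpen_univ.measure_pos volume ⟨0, trivial⟩

lemma Bint_pos : 0 < Bint := by
  rw [Bint, integral_pos_iff_support_of_nonneg
    (fun x => mul_nonneg (norm_nonneg x) (Mxw_nonneg x)) int_norm_Mxw]
  refine lt_of_lt_of_le ?_ (measure_mono ?_ (μ := volume)
    (s := {x : 𝔼 | x ≠ 0}))
  · exact (isOpen_ne : IsOpen {x : 𝔼 | x ≠ 0}).measure_pos volume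
      ⟨EuclideanSpace.single 0 1, by
        intro h
        have := congrArg (fun f : 𝔼 => f 0) h
        simpa using this⟩
  · intro x hx
    simp only [Function.mem_support]
    have : ‖x‖ ≠ 0 := norm_ne_zero_iff.mpr hx
    exact mul_ne_zero this (Mxw_pos x).ne'

/-- The Gaussian-weighted inner-product integral. -/
noncomputable def Jf (v : 𝔼) : ℝ := ∫ x : 𝔼, |⟪v, x⟫| * rexp (-2⁻¹ * ‖x‖ ^ 2)

lemma Jf_int (v : 𝔼) : Integrable (fun x : 𝔼 => |⟪v, x⟫| * rexp (-2⁻¹ * ‖x‖ ^ 2)) := by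
  refine (int_norm_gauss.const_mul ‖v‖).mono' ?_ (Filter.Eventually.of_forall fun x => ?_)
  · exact ((continuous_const.inner continuous_id).abs.mul (by continuity)).aestronglyMeasurable
  · have h1 : |⟪v, x⟫| ≤ ‖v‖ * ‖x‖ := abs_real_inner_le_norm v x
    have h2 : (0:ℝ) < rexp (-2⁻¹ * ‖x‖ ^ 2) := Real.exp_pos _
    rw [Real.norm_of_nonneg (by positivity)]
    calc |⟪v, x⟫| * rexp (-2⁻¹ * ‖x‖ ^ 2) ≤ (‖v‖ * ‖x‖) * rexp (-2⁻¹ * ‖x‖ ^ 2) := by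
          exact mul_le_mul_of_nonneg_right h1 h2.le
      _ = ‖v‖ * (‖x‖ * rexp (-2⁻¹ * ‖x‖ ^ 2)) := by ring

lemma Jf_isom (e : 𝔼 ≃ₗᵢ[ℝ] 𝔼) (v : 𝔼) : Jf (e v) = Jf v := by
  unfold Jf
  rw [← e.measurePreserving.integral_comp e.toHomeomorph.measurableEmbedding]
  congr 1; ext y
  rw [show ⟪e v, e y⟫ = ⟪v, y⟫ from e.inner_map_map v y, e.norm_map]

noncomputable def u₀ : 𝔼 := EuclideanSpace.single 0 1

lemma norm_u₀ : ‖u₀‖ = 1 := by simp [u₀]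

lemma Jf_hom (v : 𝔼) : Jf v = ‖v‖ * Jf u₀ := by
  rcases eq_or_ne v 0 with rfl | hv
  · simp [Jf]
  · have hw : ‖(‖v‖ • u₀ : 𝔼)‖ = ‖v‖ := by
      rw [norm_smul, norm_u₀, Real.norm_of_nonneg (norm_nonneg v), mul_one]
    have hrefl := Submodule.reflection_sub (v := (‖v‖ • u₀ : 𝔼)) (w := v) (by rw [hw])
    have h1 : Jf v = Jf (‖v‖ • u₀) := by
      calc Jf v = Jf ((Submodule.reflection (Submodule.span ℝ {‖v‖ • u₀ - v})ᗮ) (‖v‖ • u₀)) := by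
            rw [hrefl]
        _ = Jf (‖v‖ • u₀) := Jf_isom (Submodule.reflection (Submodule.span ℝ {‖v‖ • u₀ - v})ᗮ) (‖v‖ • u₀)
    rw [h1]
    unfold Jf
    have : ∀ x : 𝔼, |⟪(‖v‖ • u₀ : 𝔼), x⟫| * rexp (-2⁻¹ * ‖x‖ ^ 2)
        = ‖v‖ * (|⟪u₀, x⟫| * rexp (-2⁻¹ * ‖x‖ ^ 2)) := by
      intro x
      rw [real_inner_smul_left, abs_mul, abs_of_nonneg (norm_nonneg v)]; ring
    rw [integral_congr_ae (Filter.Eventually.of_forall this), integral_const_mul]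

lemma Jf_u₀_pos : 0 < Jf u₀ := by
  rw [Jf, integral_pos_iff_support_of_nonneg
    (fun x => mul_nonneg (abs_nonneg _) (Real.exp_pos _).le) (Jf_int u₀)]
  refine lt_of_lt_of_le ?_ (measure_mono ?_ (μ := volume)
    (s := {x : 𝔼 | ⟪u₀, x⟫ ≠ 0}))
  · refine IsOpen.measure_pos volume ?_ ⟨u₀, ?_⟩
    · exact isOpen_compl_singleton.preimage (continuous_const.inner continuous_id)
    · simp only [Set.mem_setOf_eq, real_inner_self_eq_norm_mul_norm, norm_u₀]
      norm_num
  · intro x hx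
    simp only [Function.mem_support]
    exact mul_ne_zero (abs_ne_zero.mpr hx) (Real.exp_pos _).ne'

noncomputable def cIoi : ℝ :=
  ∫ r : Set.Ioi (0:ℝ), ((r : ℝ) * rexp (-2⁻¹ * (r : ℝ) ^ 2))
    ∂(Measure.volumeIoiPow (Module.finrank ℝ 𝔼 - 1))

lemma transfer (v : 𝔼) :
    Jf v = (∫ ω : Metric.sphere (0 : 𝔼) 1, |⟪v, (ω : 𝔼)⟫|
      ∂((volume : Measure 𝔼).toSphere)) * cIoi := by
  have hmp := (volume : Measure 𝔼).measurePreserving_homeomorphUnitSphereProd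
  set F : Metric.sphere (0 : 𝔼) 1 × Set.Ioi (0:ℝ) → ℝ :=
    fun p => |⟪v, (p.1 : 𝔼)⟫| * ((p.2 : ℝ) * rexp (-2⁻¹ * (p.2 : ℝ) ^ 2)) with hF
  have h1 := hmp.integral_comp (Homeomorph.measurableEmbedding _) F
  have h2 : ∀ x : ({0}ᶜ : Set 𝔼), F (homeomorphUnitSphereProd 𝔼 x)
      = |⟪v, (x : 𝔼)⟫| * rexp (-2⁻¹ * ‖(x : 𝔼)‖ ^ 2) := by
    rintro ⟨x, hx⟩
    have hx0 : x ≠ 0 := hx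
    have hnx : (0:ℝ) < ‖x‖ := norm_pos_iff.mpr hx0
    simp only [hF, homeomorphUnitSphereProd_apply_fst_coe,
      homeomorphUnitSphereProd_apply_snd_coe]
    rw [inner_smul_right, abs_mul, abs_inv, abs_norm]
    field_simp
  rw [funext h2] at h1
  rw [integral_subtype_comap (measurableSet_singleton (0:𝔼)).compl
    (fun x : 𝔼 => |⟪v, x⟫| * rexp (-2⁻¹ * ‖x‖ ^ 2))] at h1
  rw [MeasureTheory.restrict_compl_singleton] at h1
  rw [Jf, h1, hF]
  unfold cIoi
  exact integral_prod_mul (fun ω : Metric.sphere (0 : 𝔼) 1 => |⟪v, (ω : 𝔼)⟫|)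
    (fun r : Set.Ioi (0:ℝ) => (r : ℝ) * rexp (-2⁻¹ * (r : ℝ) ^ 2))

lemma sphere_int_nonneg (v : 𝔼) :
    0 ≤ ∫ ω : Metric.sphere (0 : 𝔼) 1, |⟪v, (ω : 𝔼)⟫| ∂((volume : Measure 𝔼).toSphere) :=
  integral_nonneg fun ω => abs_nonneg _

lemma cIoi_pos : 0 < cIoi := by
  have h := transfer u₀
  have h2 := Jf_u₀_pos
  have h3 := sphere_int_nonneg u₀
  nlinarith [h2, h3, mul_nonneg h3 (le_of_not_gt (fun hc : cIoi < 0 => by nlinarith))]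

noncomputable def Kc : ℝ := Jf u₀ / cIoi

lemma Kc_pos : 0 < Kc := div_pos Jf_u₀_pos cIoi_pos

lemma sphere_int_eq (v : 𝔼) :
    (∫ ω : Metric.sphere (0 : 𝔼) 1, |⟪v, (ω : 𝔼)⟫| ∂((volume : Measure 𝔼).toSphere))
      = Kc * ‖v‖ := by
  have h := transfer v
  rw [Jf_hom] at h
  rw [Kc, div_mul_eq_mul_div, eq_div_iff cIoi_pos.ne', ← h]
  ring

noncomputable def Gf (ξ : 𝔼) : ℝ := ∫ x : 𝔼, ‖ξ - x‖ * Mxw x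

lemma int_G (ξ : 𝔼) : Integrable (fun x : 𝔼 => ‖ξ - x‖ * Mxw x) := by
  refine ((int_Mxw.const_mul ‖ξ‖).add int_norm_Mxw).mono'
    (((continuous_const.sub continuous_id).norm.mul cont_Mxw).aestronglyMeasurable)
    (Filter.Eventually.of_forall fun x => ?_)
  have h1 : ‖ξ - x‖ ≤ ‖ξ‖ + ‖x‖ := norm_sub_le _ _
  have h2 := Mxw_nonneg x
  rw [Real.norm_of_nonneg (mul_nonneg (norm_nonneg _) h2)]
  simp only [Pi.add_apply]
  nlinarith

lemma G_lower1 (ξ : 𝔼) : Aint * ‖ξ‖ ≤ Gf ξ := by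
  have hint1 : Integrable (fun x : 𝔼 => Mxw x • ξ) := int_Mxw.smul_const ξ
  have hint : Integrable (fun x : 𝔼 => Mxw x • (ξ - x)) := by
    have : (fun x : 𝔼 => Mxw x • (ξ - x)) = fun x => Mxw x • ξ - Mxw x • x := by
      ext x; rw [smul_sub]
    rw [this]; exact hint1.sub int_smul_Mxw
  have hval : ∫ x : 𝔼, Mxw x • (ξ - x) = Aint • ξ := by
    have : (fun x : 𝔼 => Mxw x • (ξ - x)) = fun x => Mxw x • ξ - Mxw x • x := by
      ext x; rw [smul_sub]
    rw [this, integral_sub hint1 int_smul_Mxw, mean_zero, integral_smul_const, sub_zero, Aint]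
  have hA : 0 ≤ Aint := Aint_pos.le
  calc Aint * ‖ξ‖ = ‖Aint • ξ‖ := by
        rw [norm_smul, Real.norm_of_nonneg hA]
    _ = ‖∫ x : 𝔼, Mxw x • (ξ - x)‖ := by rw [hval]
    _ ≤ ∫ x : 𝔼, ‖Mxw x • (ξ - x)‖ := norm_integral_le_integral_norm _
    _ = Gf ξ := by
        rw [Gf]
        congr 1; ext x
        rw [norm_smul, Real.norm_of_nonneg (Mxw_nonneg x), mul_comm]

lemma G_lower2 (ξ : 𝔼) : Bint - Aint * ‖ξ‖ ≤ Gf ξ := by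
  have hmono : Bint ≤ ∫ x : 𝔼, (‖ξ - x‖ * Mxw x + ‖ξ‖ * Mxw x) := by
    rw [Bint]
    refine integral_mono int_norm_Mxw ((int_G ξ).add (int_Mxw.const_mul ‖ξ‖)) fun x => ?_
    have h1 : ‖x‖ ≤ ‖ξ - x‖ + ‖ξ‖ := by
      have := norm_sub_le (x - ξ) x
      calc ‖x‖ = ‖ξ - (ξ - x)‖ := by congr 1; abel
        _ ≤ ‖ξ‖ + ‖ξ - x‖ := norm_sub_le _ _
        _ = ‖ξ - x‖ + ‖ξ‖ := by ring
    have h2 := Mxw_nonneg x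
    simp only
    nlinarith
  rw [integral_add (int_G ξ) (int_Mxw.const_mul ‖ξ‖), integral_const_mul] at hmono
  rw [← Aint] at hmono
  rw [← Gf] at hmono
  linarith [hmono]

lemma G_upper (ξ : 𝔼) : Gf ξ ≤ Aint * ‖ξ‖ + Bint := by
  have hmono : Gf ξ ≤ ∫ x : 𝔼, (‖ξ‖ * Mxw x + ‖x‖ * Mxw x) := by
    rw [Gf]
    refine integral_mono (int_G ξ) ((int_Mxw.const_mul ‖ξ‖).add int_norm_Mxw) fun x => ?_
    have h1 : ‖ξ - x‖ ≤ ‖ξ‖ + ‖x‖ := norm_sub_le _ _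
    have h2 := Mxw_nonneg x
    simp only
    nlinarith
  rw [integral_add (int_Mxw.const_mul ‖ξ‖) int_norm_Mxw, integral_const_mul, ← Aint, ← Bint]
    at hmono
  linarith [hmono, mul_comm Aint ‖ξ‖]

lemma nu_eq (ξ : 𝔼) : nu ξ = Kc * Gf ξ := by
  rw [nu]
  have hinner : ∀ ξs : 𝔼, (∫ ω : Metric.sphere (0:𝔼) 1,
      |⟪ξ - ξs, (ω : 𝔼)⟫| * Mxw ξs ∂((volume : Measure 𝔼).toSphere))
      = Kc * (‖ξ - ξs‖ * Mxw ξs) := by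
    intro ξs
    rw [integral_mul_const, sphere_int_eq]; ring
  simp only [hinner]
  rw [integral_const_mul, Gf]

theorem stmt7 :
    ∃ c₁ c₂ : ℝ, 0 < c₁ ∧ c₁ ≤ c₂ ∧
      ∀ ξ : EuclideanSpace ℝ (Fin 3),
        c₁ * (1 + ‖ξ‖ ^ 2) ^ ((1 : ℝ) / 2) ≤ nu ξ ∧
        nu ξ ≤ c₂ * (1 + ‖ξ‖ ^ 2) ^ ((1 : ℝ) / 2) := by
  refine ⟨Kc * (min Aint (Bint / 2) / 2), Kc * (Aint + Bint), ?_, ?_, ?_⟩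
  · have := Kc_pos; have := Aint_pos; have := Bint_pos
    have hm : 0 < min Aint (Bint / 2) := lt_min Aint_pos (by linarith)
    positivity
  · have hm : min Aint (Bint / 2) / 2 ≤ Aint + Bint := by
      have h1 : min Aint (Bint / 2) ≤ Aint := min_le_left _ _
      have := Bint_pos; have := Aint_pos; linarith
    exact mul_le_mul_of_nonneg_left hm Kc_pos.le
  · intro ξ
    set t := ‖ξ‖ with ht
    have ht0 : 0 ≤ t := norm_nonneg ξ
    have hs : (1 + t ^ 2) ^ ((1 : ℝ) / 2) = Real.sqrt (1 + t ^ 2) :=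
      (Real.sqrt_eq_rpow _).symm
    set s := Real.sqrt (1 + t ^ 2) with hsdef
    have hs0 : 0 ≤ s := Real.sqrt_nonneg _
    have hs2 : s ^ 2 = 1 + t ^ 2 := Real.sq_sqrt (by positivity)
    have hs1 : 1 ≤ s := by nlinarith
    have hst : t ≤ s := by nlinarith
    have hs3 : s ≤ 1 + t := by nlinarith
    have hG1 := G_lower1 ξ
    have hG2 := G_lower2 ξ
    have hGu := G_upper ξ
    have hA := Aint_pos; have hB := Bint_pos; have hK := Kc_pos
    have hGhalf : Bint / 2 ≤ Gf ξ := by linarith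
    have hm1 : min Aint (Bint / 2) ≤ Aint := min_le_left _ _
    have hm2 : min Aint (Bint / 2) ≤ Bint / 2 := min_le_right _ _
    constructor
    · rw [nu_eq, hs]
      have hgoal : min Aint (Bint / 2) / 2 * s ≤ Gf ξ := by
        have hmin0 : 0 ≤ min Aint (Bint / 2) := le_min hA.le (by linarith)
        have h4 : min Aint (Bint / 2) * s ≤ min Aint (Bint / 2) * (1 + t) :=
          mul_le_mul_of_nonneg_left hs3 hmin0
        have h5 : min Aint (Bint / 2) * (1 + t) ≤ Bint / 2 + Aint * t := by
          have := mul_le_mul_of_nonneg_right hm1 ht0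
          nlinarith
        nlinarith
      calc Kc * (min Aint (Bint / 2) / 2) * s
          = Kc * (min Aint (Bint / 2) / 2 * s) := by ring
        _ ≤ Kc * Gf ξ := mul_le_mul_of_nonneg_left hgoal hK.le
    · rw [nu_eq, hs]
      have hgoal : Gf ξ ≤ (Aint + Bint) * s := by nlinarith
      calc Kc * Gf ξ ≤ Kc * ((Aint + Bint) * s) :=
            mul_le_mul_of_nonneg_left hgoal hK.le
        _ = Kc * (Aint + Bint) * s := by ring
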